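/- Let f be a bounded continuous function on [0,∞) and let f̃ be its least concave majorant. Let 0 < a < a' < ∞ and c = (a+a')/2. If f(c) > (f̃(a) + f̃(a'))/2, then f(t) = f̃(t) for some t with a ≤ t ≤ a'. -/

import Mathlib

open Set

/-- `g` is the least concave majorant of `f` on the set `S`: `g` is concave on `S`,
dominates `f` on `S`, and is pointwise below any concave function on `S` dominating `f`. -/
def IsLeastConcaveMajorant (S : Set ℝ) (f g : ℝ → ℝ) : Prop :=
  ConcaveOn ℝ S g ∧ (∀ x ∈ S, f x ≤ g x) ∧
    ∀ h : ℝ → ℝ, ConcaveOn ℝ S h → (∀ x ∈ S, f x ≤ h x) → ∀ x ∈ S, g x ≤ h x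

lemma affine_concaveOn (S : Set ℝ) (hS : Convex ℝ S) (m b : ℝ) :
    ConcaveOn ℝ S (fun x => m * x + b) := by
  refine ⟨hS, ?_⟩
  intro x hx y hy p q hp hq hpq
  simp only [smul_eq_mul]
  have hq' : q = 1 - p := by linarith
  subst hq'
  refine le_of_eq (by ring)

lemma concave_le_secant_right {g : ℝ → ℝ} (hg : ConcaveOn ℝ (Ici (0:ℝ)) g)
    {a a' x : ℝ} (ha : 0 ≤ a) (haa' : a < a') (hx : a' < x) :
    g x ≤ g a + (g a' - g a) / (a' - a) * (x - a) := by
  have hxa : a < x := haa'.trans hx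
  have hne : x - a ≠ 0 := ne_of_gt (by linarith)
  have hne' : a' - a ≠ 0 := ne_of_gt (by linarith)
  have hp : (0:ℝ) ≤ (x - a') / (x - a) := div_nonneg (by linarith) (by linarith)
  have hq : (0:ℝ) ≤ (a' - a) / (x - a) := div_nonneg (by linarith) (by linarith)
  have hpq : (x - a') / (x - a) + (a' - a) / (x - a) = 1 := by field_simp; ring
  have hcomb : ((x - a') / (x - a)) • a + ((a' - a) / (x - a)) • x = a' := by
    simp only [smul_eq_mul]; field_simp; ring
  have h := hg.2 (mem_Ici.2 ha) (mem_Ici.2 (by linarith : (0:ℝ) ≤ x)) hp hq hpq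
  rw [hcomb] at h
  simp only [smul_eq_mul] at h
  rw [div_mul_eq_mul_div, ← sub_nonneg]
  have key : g a + (g a' - g a) * (x - a) / (a' - a) - g x
      = ((x-a)/(a'-a)) * (g a' - ((x - a') / (x - a) * g a + (a' - a) / (x - a) * g x)) := by
    field_simp; ring
  rw [key]
  exact mul_nonneg (div_nonneg (by linarith) (by linarith)) (by linarith)

lemma concave_le_secant_left {g : ℝ → ℝ} (hg : ConcaveOn ℝ (Ici (0:ℝ)) g)
    {a a' x : ℝ} (hx0 : 0 ≤ x) (haa' : a < a') (hx : x < a) :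
    g x ≤ g a + (g a' - g a) / (a' - a) * (x - a) := by
  have hxa' : x < a' := hx.trans haa'
  have hne : a' - x ≠ 0 := ne_of_gt (by linarith)
  have hne' : a' - a ≠ 0 := ne_of_gt (by linarith)
  have hp : (0:ℝ) ≤ (a' - a) / (a' - x) := div_nonneg (by linarith) (by linarith)
  have hq : (0:ℝ) ≤ (a - x) / (a' - x) := div_nonneg (by linarith) (by linarith)
  have hpq : (a' - a) / (a' - x) + (a - x) / (a' - x) = 1 := by field_simp; ring
  have hcomb : ((a' - a) / (a' - x)) • x + ((a - x) / (a' - x)) • a' = a := by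
    simp only [smul_eq_mul]; field_simp; ring
  have h := hg.2 (mem_Ici.2 hx0) (mem_Ici.2 (by linarith : (0:ℝ) ≤ a')) hp hq hpq
  rw [hcomb] at h
  simp only [smul_eq_mul] at h
  rw [div_mul_eq_mul_div, ← sub_nonneg]
  have key : g a + (g a' - g a) * (x - a) / (a' - a) - g x
      = ((a'-x)/(a'-a)) * (g a - ((a' - a) / (a' - x) * g x + (a - x) / (a' - x) * g a')) := by
    field_simp; ring
  rw [key]
  exact mul_nonneg (div_nonneg (by linarith) (by linarith)) (by linarith)

/-- Lemma 5.1: if `f` is bounded and continuous on `[0,∞)`, `f̃` is its least concave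
majorant, `0 < a < a' < ∞`, `c = (a+a')/2`, and `f(c) > (f̃(a)+f̃(a'))/2`, then
`f(t) = f̃(t)` for some `t ∈ [a, a']`. -/
theorem lcm_touches_of_midpoint_above
    (f ftil : ℝ → ℝ)
    (hbd : ∃ C : ℝ, ∀ x ∈ Ici (0 : ℝ), |f x| ≤ C)
    (hcont : ContinuousOn f (Ici (0 : ℝ)))
    (hlcm : IsLeastConcaveMajorant (Ici (0 : ℝ)) f ftil)
    (a a' : ℝ) (ha : 0 < a) (haa' : a < a')
    (hmid : (ftil a + ftil a') / 2 < f ((a + a') / 2)) :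
    ∃ t ∈ Icc a a', f t = ftil t := by
  obtain ⟨hconc, hmaj, hleast⟩ := hlcm
  set s : ℝ := (ftil a' - ftil a) / (a' - a) with hs
  set L : ℝ → ℝ := fun x => ftil a + s * (x - a) with hL
  have hsub : Icc a a' ⊆ Ici (0:ℝ) := fun x hx => le_trans ha.le hx.1
  have hcontFL : ContinuousOn (fun x => f x - L x) (Icc a a') := by
    apply ContinuousOn.sub (hcont.mono hsub)
    fun_prop
  obtain ⟨t, htmem, htmax⟩ := (isCompact_Icc).exists_isMaxOn
    (nonempty_Icc.2 haa'.le) hcontFL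
  refine ⟨t, htmem, ?_⟩
  set M : ℝ := f t - L t with hM
  have hc : (a + a') / 2 ∈ Icc a a' := ⟨by linarith, by linarith⟩
  have hLc : L ((a + a') / 2) = (ftil a + ftil a') / 2 := by
    simp only [hL, hs]
    have hne' : a' - a ≠ 0 := ne_of_gt (by linarith)
    field_simp; ring
  have hMpos : 0 < M := by
    have h1 : f ((a+a')/2) - L ((a+a')/2) ≤ f t - L t := htmax hc
    clear_value M L s
    rw [hLc] at h1
    rw [hM]
    linarith
  set g : ℝ → ℝ := fun x => min (ftil x) (L x + M) with hg
  have hgconc : ConcaveOn ℝ (Ici (0:ℝ)) g := by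
    have haff : ConcaveOn ℝ (Ici (0:ℝ)) (fun x => L x + M) := by
      have h := affine_concaveOn (Ici (0:ℝ)) (convex_Ici 0) s (ftil a - s * a + M)
      convert h using 2 with x
      simp only [hL]; ring
    exact hconc.inf haff
  have hgmaj : ∀ x ∈ Ici (0:ℝ), f x ≤ g x := by
    intro x hx
    refine le_min (hmaj x hx) ?_
    rcases le_or_gt x a' with hxr | hxr
    · rcases le_or_gt a x with hxl | hxl
      · have h1 : f x - L x ≤ f t - L t := htmax (⟨hxl, hxr⟩ : x ∈ Icc a a')
        simp only [hM]; linarith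
      · have h1 := concave_le_secant_left hconc (mem_Ici.1 hx) haa' hxl
        have h2 := hmaj x hx
        simp only [hL, hs]
        linarith
    · have h1 := concave_le_secant_right hconc ha.le haa' hxr
      have h2 := hmaj x hx
      simp only [hL, hs]
      linarith
  have hle := hleast g hgconc hgmaj t (hsub htmem)
  have h3 : ftil t ≤ L t + M := le_trans hle (min_le_right _ _)
  have hft : f t ≤ ftil t := hmaj t (hsub htmem)
  simp only [hM] at h3
  linarith
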